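/- Let H be a complex Hilbert space and let A, B be positive bounded linear operators on H such that AB + BA ≥ 0. Then for every λ > 0, (A+B)(λI+A+B)^{-1} ≤ A(λI+A)^{-1} + B(λI+B)^{-1}. -/

import Mathlib

/-- A real function `f` is *operator monotone on the set `S ⊆ ℝ`* if for all bounded
self-adjoint operators `A ≤ B` (in the Loewner order) on any complex Hilbert space, with
spectra contained in `S`, one has `f(A) ≤ f(B)`, where `f(A)` is given by the continuous
functional calculus. -/
def IsOperatorMonotoneOn (f : ℝ → ℝ) (S : Set ℝ) : Prop :=
  ∀ (K : Type) [NormedAddCommGroup K] [InnerProductSpace ℂ K] [CompleteSpace K],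
    ∀ A B : K →L[ℂ] K, IsSelfAdjoint A → IsSelfAdjoint B →
      spectrum ℝ A ⊆ S → spectrum ℝ B ⊆ S →
      A ≤ B → cfc f A ≤ cfc f B

/-- A real function `f` is *operator convex on `[0,∞)`* if for all bounded self-adjoint
operators `A`, `B` on any complex Hilbert space with spectra in `[0,∞)` and all `t ∈ [0,1]`,
`f(tA + (1-t)B) ≤ t f(A) + (1-t) f(B)` in the sense of the continuous functional calculus. -/
def IsOperatorConvexOnNonneg (f : ℝ → ℝ) : Prop :=
  ∀ (K : Type) [NormedAddCommGroup K] [InnerProductSpace ℂ K] [CompleteSpace K],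
    ∀ A B : K →L[ℂ] K, IsSelfAdjoint A → IsSelfAdjoint B →
      spectrum ℝ A ⊆ Set.Ici (0 : ℝ) → spectrum ℝ B ⊆ Set.Ici (0 : ℝ) →
      ∀ t : ℝ, 0 ≤ t → t ≤ 1 →
        cfc f (t • A + (1 - t) • B) ≤ t • cfc f A + (1 - t) • cfc f B

/-- The right derivative of `f` at `0`, `f′₊(0) = lim_{t→0⁺} (f t - f 0)/t`, exists and is
non-negative. -/
def HasNonnegRightDerivAtZero (f : ℝ → ℝ) : Prop :=
  ∃ d : ℝ, 0 ≤ d ∧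
    Filter.Tendsto (fun t => (f t - f 0) / t) (nhdsWithin 0 (Set.Ioi 0)) (nhds d)

/-- The open interval `(a,b) ⊆ ℝ` determined by extended reals `a < b`. -/
def erealIoo (a b : EReal) : Set ℝ := {x : ℝ | a < (x : ℝ) ∧ (x : ℝ) < b}

section Aux

variable (H : Type) [NormedAddCommGroup H] [InnerProductSpace ℂ H] [CompleteSpace H]

private lemma resolvent_facts (l : ℝ) (hl : 0 < l) (D : H →L[ℂ] H) (hD : 0 ≤ D) :
    ((l • 1 + D) * cfc (fun t : ℝ => l * (l + t)⁻¹) D = l • (1 : H →L[ℂ] H)) ∧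
    (cfc (fun t : ℝ => l * (l + t)⁻¹) D * (l • 1 + D) = l • (1 : H →L[ℂ] H)) ∧
    (cfc (fun t : ℝ => l * (l + t)⁻¹) D ≤ 1) ∧
    (cfc (fun t : ℝ => t / (l + t)) D = 1 - cfc (fun t : ℝ => l * (l + t)⁻¹) D) := by
  have hsD : IsSelfAdjoint D := .of_nonneg hD
  have h0 : ∀ t ∈ spectrum ℝ D, l + t ≠ 0 := fun t ht =>
    (add_pos_of_pos_of_nonneg hl (spectrum_nonneg_of_nonneg hD ht)).ne'
  have hlin : ContinuousOn (fun t : ℝ => l + t) (spectrum ℝ D) :=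
    (continuous_const.add continuous_id).continuousOn
  have hg : ContinuousOn (fun t : ℝ => l * (l + t)⁻¹) (spectrum ℝ D) :=
    continuousOn_const.mul (hlin.inv₀ h0)
  have hXD : cfc (fun t : ℝ => l + t) D = l • 1 + D := by
    rw [show (fun t : ℝ => l + t) = (fun t : ℝ => (fun _ : ℝ => l) t + (fun s : ℝ => s) t)
        from rfl,
      cfc_add D (fun _ : ℝ => l) (fun s : ℝ => s) continuousOn_const continuous_id'.continuousOn, cfc_const l D hsD, cfc_id' ℝ D hsD,
      Algebra.algebraMap_eq_smul_one]
  have hprod : cfc (fun t : ℝ => (l + t) * (l * (l + t)⁻¹)) D = l • (1 : H →L[ℂ] H) := by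
    rw [show (l : ℝ) • (1 : H →L[ℂ] H) = algebraMap ℝ (H →L[ℂ] H) l from
      (Algebra.algebraMap_eq_smul_one l), ← cfc_const l D hsD]
    apply cfc_congr
    intro t ht
    show (l + t) * (l * (l + t)⁻¹) = l
    rw [mul_left_comm, mul_inv_cancel₀ (h0 t ht), mul_one]
  refine ⟨?_, ?_, ?_, ?_⟩
  · rw [← hXD, ← cfc_mul _ _ D hlin hg, hprod]
  · rw [← hXD, ← cfc_mul _ _ D hg hlin]
    rw [← hprod]
    exact cfc_congr fun t ht => mul_comm _ _
  · calc cfc (fun t : ℝ => l * (l + t)⁻¹) D ≤ cfc (fun _ : ℝ => (1 : ℝ)) D := by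
          refine cfc_mono (fun t ht => ?_) hg continuousOn_const
          have ht0 := spectrum_nonneg_of_nonneg hD ht
          rw [← div_eq_mul_inv]
          exact div_le_one_of_le₀ (by linarith) (by linarith)
      _ = 1 := by rw [cfc_const 1 D hsD, map_one]
  · have : cfc (fun t : ℝ => t / (l + t)) D
        = cfc (fun t : ℝ => (fun _ : ℝ => (1 : ℝ)) t - (fun t : ℝ => l * (l + t)⁻¹) t) D := by
      apply cfc_congr
      intro t ht
      have hne := h0 t ht
      show t / (l + t) = 1 - l * (l + t)⁻¹
      rw [← div_eq_mul_inv]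
      field_simp
      ring
    rw [this, cfc_sub _ _ D continuousOn_const hg, cfc_const 1 D hsD, map_one]

end Aux

/-- If `A`, `B` are positive bounded operators on a complex Hilbert space with
`AB + BA ≥ 0`, then for every `λ > 0`,
`(A+B)(λ+A+B)⁻¹ ≤ A(λ+A)⁻¹ + B(λ+B)⁻¹`, where `A(λ+A)⁻¹ = cfc (t ↦ t/(λ+t)) A`. -/
theorem resolvent_subadditive_of_symmetrized_product_pos
    (H : Type) [NormedAddCommGroup H] [InnerProductSpace ℂ H] [CompleteSpace H]
    (A B : H →L[ℂ] H) (hA : 0 ≤ A) (hB : 0 ≤ B) (h : 0 ≤ A * B + B * A)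
    (l : ℝ) (hl : 0 < l) :
    cfc (fun t : ℝ => t / (l + t)) (A + B) ≤
      cfc (fun t : ℝ => t / (l + t)) A + cfc (fun t : ℝ => t / (l + t)) B := by
  have hsA : IsSelfAdjoint A := .of_nonneg hA
  have hsB : IsSelfAdjoint B := .of_nonneg hB
  have hC : (0 : H →L[ℂ] H) ≤ A + B := add_nonneg hA hB
  obtain ⟨hXP, hPX, hP1, hfA⟩ := resolvent_facts H l hl A hA
  obtain ⟨hYQ, hQY, hQ1, hfB⟩ := resolvent_facts H l hl B hB
  obtain ⟨hZU, hUZ, hU1, hfC⟩ := resolvent_facts H l hl (A + B) hC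
  set P := cfc (fun t : ℝ => l * (l + t)⁻¹) A with hPdef
  set Q := cfc (fun t : ℝ => l * (l + t)⁻¹) B with hQdef
  set U := cfc (fun t : ℝ => l * (l + t)⁻¹) (A + B) with hUdef
  set e : H →L[ℂ] H := l • 1 with hedef
  set Z : H →L[ℂ] H := e + (A + B) with hZdef
  set T : H →L[ℂ] H := l⁻¹ • U with hTdef
  have hsU : IsSelfAdjoint U := cfc_predicate _ (A + B)
  have hsT : IsSelfAdjoint T := (IsSelfAdjoint.all l⁻¹).smul hsU
  have hTZ : T * Z = 1 := by
    rw [hTdef, smul_mul_assoc, hUZ, hedef, smul_smul, inv_mul_cancel₀ hl.ne', one_smul]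
  have hZT : Z * T = 1 := by
    rw [hTdef, mul_smul_comm, hZU, hedef, smul_smul, inv_mul_cancel₀ hl.ne', one_smul]
  -- conjugations of resolvents by Z
  have hZUZ : Z * U * Z = e * Z := by rw [hZU]
  have hZPZ : Z * P * Z = e * Z + (B * e + B * (P * B)) := by
    have h1 : Z * P = e + B * P := by
      rw [hZdef, show e + (A + B) = (e + A) + B from (add_assoc e A B).symm, add_mul, hXP]
    have h2 : P * Z = e + P * B := by
      rw [hZdef, show e + (A + B) = (e + A) + B from (add_assoc e A B).symm, mul_add, hPX]
    calc Z * P * Z = (e + B * P) * Z := by rw [h1]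
      _ = e * Z + B * (P * Z) := by rw [add_mul, mul_assoc]
      _ = e * Z + B * (e + P * B) := by rw [h2]
      _ = e * Z + (B * e + B * (P * B)) := by rw [mul_add B e (P * B)]
  have hZQZ : Z * Q * Z = e * Z + (A * e + A * (Q * A)) := by
    have h1 : Z * Q = e + A * Q := by
      rw [hZdef, show e + (A + B) = (e + B) + A by abel, add_mul, hYQ]
    have h2 : Q * Z = e + Q * A := by
      rw [hZdef, show e + (A + B) = (e + B) + A by abel, mul_add, hQY]
    calc Z * Q * Z = (e + A * Q) * Z := by rw [h1]
      _ = e * Z + A * (Q * Z) := by rw [add_mul, mul_assoc]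
      _ = e * Z + A * (e + Q * A) := by rw [h2]
      _ = e * Z + (A * e + A * (Q * A)) := by rw [mul_add A e (Q * A)]
  -- the key identity
  have hM : Z * (1 + U - P - Q) * Z = (A + B) * (A + B) - B * (P * B) - A * (Q * A) := by
    have hexp : Z * (1 + U - P - Q) * Z = Z * Z + Z * U * Z - Z * P * Z - Z * Q * Z := by
      noncomm_ring
    rw [hexp, hZUZ, hZPZ, hZQZ]
    have hZZ : Z * Z - e * Z = (A + B) * e + (A + B) * (A + B) := by
      rw [← sub_mul, show Z - e = A + B by rw [hZdef]; abel, hZdef, mul_add]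
    have hre : Z * Z + e * Z - (e * Z + (B * e + B * (P * B)))
          - (e * Z + (A * e + A * (Q * A)))
        = (Z * Z - e * Z) - (A * e + B * e) - B * (P * B) - A * (Q * A) := by abel
    rw [hre, hZZ, add_mul A B e]
    abel
  -- positivity of the middle term
  have hMpos : (0 : H →L[ℂ] H) ≤ Z * (1 + U - P - Q) * Z := by
    rw [hM]
    have hBPB : B * (P * B) ≤ B * B := by
      have h' := star_left_conjugate_le_conjugate hP1 B
      rw [hsB.star_eq, mul_one] at h'
      rwa [mul_assoc] at h'
    have hAQA : A * (Q * A) ≤ A * A := by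
      have h' := star_left_conjugate_le_conjugate hQ1 A
      rw [hsA.star_eq, mul_one] at h'
      rwa [mul_assoc] at h'
    have hsplit : (A + B) * (A + B) - B * (P * B) - A * (Q * A)
        = (A * B + B * A) + ((B * B - B * (P * B)) + (A * A - A * (Q * A))) := by
      noncomm_ring
    rw [hsplit]
    exact add_nonneg h (add_nonneg (sub_nonneg.2 hBPB) (sub_nonneg.2 hAQA))
  -- assemble
  rw [hfA, hfB, hfC, ← sub_nonneg]
  have hre2 : (1 - P) + (1 - Q) - (1 - U) = 1 + U - P - Q := by abel
  rw [hre2]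
  have hfinal : star T * (Z * (1 + U - P - Q) * Z) * T = 1 + U - P - Q := by
    rw [hsT.star_eq]
    calc T * (Z * (1 + U - P - Q) * Z) * T
        = (T * Z) * (1 + U - P - Q) * (Z * T) := by noncomm_ring
      _ = 1 + U - P - Q := by rw [hTZ, hZT, one_mul, mul_one]
  rw [← hfinal]
  exact star_left_conjugate_nonneg hMpos T
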